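/- Let ω be a nonnegative Borel measure on ℝ with ∫_ℝ dω(λ)/(1+λ²) < ∞ and m(z) = c + dz + ∫_ℝ dω(λ)[1/(λ-z) - λ/(1+λ²)] for z ∈ ℂ₊ with c ∈ ℝ, d ≥ 0. Then for all λ₁ < λ₂ in ℝ, ω((λ₁,λ₂]) = lim_{δ↓0} lim_{ε↓0} (1/π) ∫_{λ₁+δ}^{λ₂+δ} Im(m(λ + iε)) dλ (Stieltjes inversion formula). -/

import Mathlib

open MeasureTheory Filter

open Set Real


lemma sub_arctan_mono : Monotone (fun x : ℝ => x - Real.arctan x) := by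
  apply monotone_of_deriv_nonneg
  · exact differentiable_id.sub Real.differentiable_arctan
  · intro x
    rw [deriv_fun_sub differentiableAt_fun_id (Real.differentiable_arctan x), deriv_id'',
      Real.deriv_arctan]
    have h1 : (0:ℝ) < 1 + x ^ 2 := by positivity
    have h2 : 1 / (1 + x ^ 2) ≤ 1 := by
      rw [div_le_one h1]; nlinarith
    linarith

lemma arctan_sub_arctan_le {q p : ℝ} (h : q ≤ p) :
    Real.arctan p - Real.arctan q ≤ p - q := by
  have := sub_arctan_mono h
  simp only at this
  linarith

lemma poisson_integral {ε : ℝ} (hε : 0 < ε) (l a b : ℝ) :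
    (∫ x in a..b, ε / ((l - x) ^ 2 + ε ^ 2)) =
      Real.arctan ((b - l) / ε) - Real.arctan ((a - l) / ε) := by
  have h1 : ∀ x ∈ Set.uIcc a b, ε / ((l - x) ^ 2 + ε ^ 2)
      = (fun y : ℝ => (fun t : ℝ => ε⁻¹ * (1 / (1 + t ^ 2))) (y / ε)) (x - l) := by
    intro x _
    have hne : (l - x) ^ 2 + ε ^ 2 ≠ 0 := by positivity
    field_simp
    ring
  rw [intervalIntegral.integral_congr h1,
    intervalIntegral.integral_comp_sub_right (fun y : ℝ => ε⁻¹ * (1 / (1 + (y/ε) ^ 2))) l,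
    intervalIntegral.integral_comp_div (f := fun t : ℝ => ε⁻¹ * (1 / (1 + t ^ 2))) hε.ne',
    intervalIntegral.integral_const_mul, integral_one_div_one_add_sq]
  rw [smul_eq_mul]
  field_simp

variable {ω : Measure ℝ}

lemma finite_on_Icc (hω : Integrable (fun l : ℝ => 1 / (1 + l ^ 2)) ω) (R : ℝ) :
    ω (Set.Icc (-R) R) < ⊤ := by
  have hfin : (∫⁻ l, ENNReal.ofReal (1 / (1 + l ^ 2)) ∂ω) < ⊤ := by
    have := hω.2
    rw [hasFiniteIntegral_iff_norm] at this
    convert this using 3 with l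
    rw [Real.norm_eq_abs, abs_of_nonneg (by positivity)]
  have hc : (0:ℝ) < 1 / (1 + R ^ 2) := by positivity
  have key : ENNReal.ofReal (1 / (1 + R ^ 2)) * ω (Set.Icc (-R) R)
      ≤ ∫⁻ l, ENNReal.ofReal (1 / (1 + l ^ 2)) ∂ω := by
    rw [← setLIntegral_const (Set.Icc (-R) R) (ENNReal.ofReal (1 / (1 + R ^ 2)))]
    refine le_trans (setLIntegral_mono (by measurability) ?_) (setLIntegral_le_lintegral _ _)
    intro l hl
    apply ENNReal.ofReal_le_ofReal
    have h1 : l ^ 2 ≤ R ^ 2 := sq_le_sq' hl.1 hl.2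
    apply div_le_div_of_nonneg_left one_pos.le (by positivity)
    linarith
  by_contra h
  rw [not_lt, top_le_iff] at h
  rw [h, ENNReal.mul_top (by simpa [ENNReal.ofReal_eq_zero, not_le] using hc)] at key
  simp only [top_le_iff] at key
  exact absurd key hfin.ne

lemma finite_of_bddset (hω : Integrable (fun l : ℝ => 1 / (1 + l ^ 2)) ω)
    {s : Set ℝ} {x y : ℝ} (hs : s ⊆ Set.Icc x y) : ω s < ⊤ := by
  refine lt_of_le_of_lt (measure_mono (hs.trans ?_)) (finite_on_Icc hω (|x| + |y|))
  intro t ht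
  constructor
  · have := abs_nonneg y; have := neg_abs_le x; exact le_trans (by linarith) ht.1
  · have := abs_nonneg x; have := le_abs_self y; exact le_trans ht.2 (by linarith)

lemma omega_sigmaFinite (hω : Integrable (fun l : ℝ => 1 / (1 + l ^ 2)) ω) :
    SigmaFinite ω := by
  constructor
  refine ⟨⟨fun n => Set.Icc (-(n:ℝ)) n, fun n => trivial, fun n => finite_on_Icc hω n, ?_⟩⟩
  ext x
  simp only [Set.mem_iUnion, Set.mem_univ, iff_true, Set.mem_Icc]
  obtain ⟨n, hn⟩ := exists_nat_ge |x|
  exact ⟨n, by have := neg_abs_le x; linarith, by have := le_abs_self x; linarith⟩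

variable {ω : Measure ℝ}

lemma sub_ne_zero_of_im {z : ℂ} (hz : 0 < z.im) (l : ℝ) : (l : ℂ) - z ≠ 0 := by
  intro h
  have : ((l : ℂ) - z).im = 0 := by rw [h]; simp
  simp only [Complex.sub_im, Complex.ofReal_im, zero_sub, neg_eq_zero] at this
  exact hz.ne' this

lemma integrand_bound {z : ℂ} (hz : 0 < z.im) (l : ℝ) :
    ‖((l : ℂ) - z)⁻¹ - ((l / (1 + l ^ 2) : ℝ) : ℂ)‖ ≤
      ((1 + ‖z‖ + 2 * ‖z‖ ^ 2) / z.im + 2 * (1 + ‖z‖)) * (1 / (1 + l ^ 2)) := by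
  have hne : (l : ℂ) - z ≠ 0 := sub_ne_zero_of_im hz l
  have hl2 : (0:ℝ) < 1 + l ^ 2 := by positivity
  have hl2c : ((1:ℂ) + (l:ℂ) ^ 2) ≠ 0 := by
    rw [show (1:ℂ) + (l:ℂ) ^ 2 = ((1 + l ^ 2 : ℝ) : ℂ) by push_cast; ring]
    exact_mod_cast hl2.ne'
  have heq : ((l : ℂ) - z)⁻¹ - ((l / (1 + l ^ 2) : ℝ) : ℂ)
      = (1 + (l:ℂ) * z) / (((l:ℂ) - z) * (1 + (l:ℂ) ^ 2)) := by
    push_cast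
    field_simp
    ring
  rw [heq]
  rw [norm_div, norm_mul]
  have h1 : ‖(1 : ℂ) + (l:ℂ) * z‖ ≤ 1 + |l| * ‖z‖ := by
    refine le_trans (norm_add_le _ _) ?_
    simp [Complex.norm_real, abs_of_nonneg]
  have h2 : ‖(1 : ℂ) + (l:ℂ) ^ 2‖ = 1 + l ^ 2 := by
    rw [show ((1:ℂ) + (l:ℂ)^2) = ((1 + l^2 : ℝ) : ℂ) by push_cast; ring,
      Complex.norm_real, Real.norm_eq_abs, abs_of_pos hl2]
  rw [h2]
  have him : z.im ≤ ‖(l:ℂ) - z‖ := by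
    have := Complex.abs_im_le_norm ((l:ℂ) - z)
    simp only [Complex.sub_im, Complex.ofReal_im, zero_sub, abs_neg] at this
    calc z.im ≤ |z.im| := le_abs_self _
    _ ≤ _ := this
  have hnormpos : 0 < ‖(l:ℂ) - z‖ := lt_of_lt_of_le hz him
  have key : ‖(1 : ℂ) + (l:ℂ) * z‖ / ‖(l:ℂ) - z‖
      ≤ (1 + ‖z‖ + 2 * ‖z‖ ^ 2) / z.im + 2 * (1 + ‖z‖) := by
    rcases le_or_gt (|l|) (2 * ‖z‖ + 1) with hc | hc
    · have : ‖(1 : ℂ) + (l:ℂ) * z‖ ≤ 1 + ‖z‖ + 2 * ‖z‖ ^ 2 := by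
        refine le_trans h1 ?_
        have h0 : 0 ≤ ‖z‖ := norm_nonneg _
        nlinarith
      calc ‖(1 : ℂ) + (l:ℂ) * z‖ / ‖(l:ℂ) - z‖ ≤ (1 + ‖z‖ + 2 * ‖z‖ ^ 2) / z.im := by
            apply div_le_div₀ (by positivity) this hz him
      _ ≤ _ := by
            have h0 : 0 ≤ ‖z‖ := norm_nonneg _
            nlinarith
    · have hlz : ‖z‖ ≤ ‖(l:ℂ) - z‖ + 0 := by
        have : |l| - ‖z‖ ≤ ‖(l:ℂ) - z‖ := by
          have := norm_sub_norm_le ((l:ℂ)) z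
          simpa [Complex.norm_real] using this
        linarith [hc.le]
      have hden : (|l| + 1) / 2 ≤ ‖(l:ℂ) - z‖ := by
        have : |l| - ‖z‖ ≤ ‖(l:ℂ) - z‖ := by
          have := norm_sub_norm_le ((l:ℂ)) z
          simpa [Complex.norm_real] using this
        have : ‖z‖ ≤ (|l| - 1)/2 := by linarith
        linarith
      have hnum : ‖(1 : ℂ) + (l:ℂ) * z‖ ≤ (|l| + 1) * (1 + ‖z‖) := by
        refine le_trans h1 ?_
        have h0 : 0 ≤ ‖z‖ := norm_nonneg _
        have h0' : 0 ≤ |l| := abs_nonneg _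
        nlinarith
      have hpos : (0:ℝ) < (|l| + 1) / 2 := by positivity
      calc ‖(1 : ℂ) + (l:ℂ) * z‖ / ‖(l:ℂ) - z‖ ≤ (|l| + 1) * (1 + ‖z‖) / ((|l| + 1) / 2) := by
            apply div_le_div₀ (by positivity) hnum hpos hden
      _ = 2 * (1 + ‖z‖) := by field_simp
      _ ≤ _ := by
            have : 0 ≤ (1 + ‖z‖ + 2 * ‖z‖ ^ 2) / z.im := by positivity
            linarith
  calc ‖(1 : ℂ) + (l:ℂ) * z‖ / (‖(l:ℂ) - z‖ * (1 + l ^ 2))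
      = (‖(1 : ℂ) + (l:ℂ) * z‖ / ‖(l:ℂ) - z‖) * (1 / (1 + l ^ 2)) := by
        field_simp
    _ ≤ _ := by
        apply mul_le_mul_of_nonneg_right key (by positivity)

lemma integrand_integrable (hω : Integrable (fun l : ℝ => 1 / (1 + l ^ 2)) ω)
    {z : ℂ} (hz : 0 < z.im) :
    Integrable (fun l : ℝ => ((l : ℂ) - z)⁻¹ - ((l / (1 + l ^ 2) : ℝ) : ℂ)) ω := by
  refine Integrable.mono' (hω.const_mul ((1 + ‖z‖ + 2 * ‖z‖ ^ 2) / z.im + 2 * (1 + ‖z‖))) ?_ ?_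
  · refine Continuous.aestronglyMeasurable ?_
    apply Continuous.sub
    · exact (Continuous.sub (Complex.continuous_ofReal) continuous_const).inv₀
        (fun l => sub_ne_zero_of_im hz l)
    · apply Complex.continuous_ofReal.comp
      exact continuous_id.div (by continuity) (fun l => by positivity)
  · exact Filter.Eventually.of_forall (integrand_bound hz)

lemma im_m_eq {ω : Measure ℝ} {c d : ℝ}
    (hω : Integrable (fun l : ℝ => 1 / (1 + l ^ 2)) ω)
    {m : ℂ → ℂ}
    (hm : ∀ z : ℂ, 0 < z.im →
      m z = (c : ℂ) + (d : ℂ) * z +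
        ∫ l : ℝ, (((l : ℂ) - z)⁻¹ - ((l / (1 + l ^ 2) : ℝ) : ℂ)) ∂ω)
    {ε : ℝ} (hε : 0 < ε) (lam : ℝ)
    (hint : Integrable (fun l : ℝ => ((l : ℂ) - ((lam:ℂ) + ε * Complex.I))⁻¹
      - ((l / (1 + l ^ 2) : ℝ) : ℂ)) ω) :
    (m ((lam : ℂ) + ε * Complex.I)).im
      = d * ε + ∫ l : ℝ, ε / ((l - lam) ^ 2 + ε ^ 2) ∂ω := by
  set z : ℂ := (lam : ℂ) + ε * Complex.I with hzdef
  have hzim : z.im = ε := by simp [hzdef]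
  have hzre : z.re = lam := by simp [hzdef]
  rw [hm z (by rw [hzim]; exact hε)]
  rw [Complex.add_im, Complex.add_im]
  have h1 : ((c:ℂ)).im = 0 := by simp
  have h2 : ((d:ℂ) * z).im = d * ε := by
    rw [Complex.mul_im]
    simp [hzim]
  have him : ∫ l : ℝ, ((fun w : ℂ => ((l:ℝ) : ℂ)) 0, True).1.im ∂ω = 0 := by simp
  clear him
  have hcomm := Complex.imCLM.integral_comp_comm hint
  simp only [Complex.imCLM_apply] at hcomm
  rw [h1, h2, ← hcomm]
  congr 1
  · ring
  · congr 1
    ext l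
    rw [Complex.sub_im, Complex.inv_im]
    have : ((l:ℂ) - z).im = -ε := by simp [Complex.sub_im, hzim]
    rw [this]
    have hre : ((l:ℂ) - z).re = l - lam := by simp [Complex.sub_re, hzre]
    rw [Complex.normSq_apply, this, hre]
    simp only [Complex.ofReal_im, sub_zero]
    rw [neg_neg]
    ring_nf

lemma integrable_comp_snd {μ ν : Measure ℝ} [IsFiniteMeasure μ] [SFinite ν] {g : ℝ → ℝ}
    (hg : Integrable g ν) :
    Integrable (fun p : ℝ × ℝ => g p.2) (μ.prod ν) := by
  have hmap : (μ.prod ν).map Prod.snd = μ univ • ν := Measure.map_snd_prod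
  have h2 : Integrable g ((μ.prod ν).map Prod.snd) := by
    rw [hmap]
    exact hg.smul_measure (measure_ne_top μ univ)
  rw [integrable_map_measure ?_ measurable_snd.aemeasurable] at h2
  · exact h2
  · rw [hmap]
    exact hg.1.smul_measure _

lemma kernel_bound {ε a b : ℝ} (hε : 0 < ε) {lam : ℝ}
    (h1 : a ≤ lam) (h2 : lam ≤ b) (l : ℝ) :
    ε / ((l - lam) ^ 2 + ε ^ 2)
      ≤ ((1 + (2 * (|a| ⊔ |b|) + 1) ^ 2) / ε + 4 * ε) * (1 / (1 + l ^ 2)) := by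
  set M := |a| ⊔ |b| with hM
  have hM0 : 0 ≤ M := le_trans (abs_nonneg a) le_sup_left
  have hlamM : |lam| ≤ M := by
    rw [abs_le]
    constructor
    · have := neg_abs_le a; have : -M ≤ a := by
        have := le_sup_left (a := |a|) (b := |b|); linarith [neg_abs_le a]
      linarith
    · have : b ≤ M := le_trans (le_abs_self b) le_sup_right
      linarith
  have hl2 : (0:ℝ) < 1 + l ^ 2 := by positivity
  have hquart : ∀ x : ℝ, (1 + l ^ 2) / 4 ≤ x → ε / (x + ε ^ 2) ≤ 4 * ε * (1 / (1 + l ^ 2)) := by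
    intro x hx
    have hx0 : (0:ℝ) < x + ε ^ 2 := by nlinarith
    rw [div_le_iff₀ hx0]
    have h4 : 4 * ε * (1 / (1 + l ^ 2)) = 4 * ε / (1 + l ^ 2) := by ring
    rw [h4, div_mul_eq_mul_div, le_div_iff₀ hl2]
    nlinarith
  rcases le_or_gt (|l|) (2 * M + 1) with hc | hc
  · have hle : ε / ((l - lam) ^ 2 + ε ^ 2) ≤ 1 / ε := by
      rw [div_le_div_iff₀ (by positivity) hε]
      nlinarith [sq_nonneg (l - lam)]
    refine le_trans hle ?_
    have hl2le : 1 + l ^ 2 ≤ 1 + (2 * M + 1) ^ 2 := by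
      have := sq_le_sq' (neg_le_of_neg_le (by linarith [neg_abs_le l])) (le_trans (le_abs_self l) hc)
      nlinarith [abs_nonneg l, le_abs_self l, neg_abs_le l]
    have : 1 / ε ≤ (1 + (2 * M + 1) ^ 2) / ε * (1 / (1 + l ^ 2)) := by
      rw [div_mul_div_comm, mul_one, div_le_div_iff₀ hε (by positivity)]
      nlinarith
    refine le_trans this ?_
    have : 0 ≤ 4 * ε * (1 / (1 + l ^ 2)) := by positivity
    nlinarith [this]
  · have key : (1 + l ^ 2) / 4 ≤ (l - lam) ^ 2 := by
      rcases le_or_gt 0 l with hl0 | hl0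
      · have habs : l = |l| := (abs_of_nonneg hl0).symm
        have : (|l| + 1) / 2 ≤ l - lam := by
          rw [← habs]
          have : lam ≤ M := le_trans (le_abs_self lam) hlamM
          linarith
        nlinarith [abs_nonneg l, le_abs_self l, neg_abs_le l]
      · have habs : -l = |l| := (abs_of_neg hl0).symm
        have : (|l| + 1) / 2 ≤ lam - l := by
          have : -M ≤ lam := by linarith [neg_abs_le lam, hlamM]
          linarith
        nlinarith [abs_nonneg l]
    have := hquart _ key
    refine le_trans this ?_
    have h0 : 0 ≤ (1 + (2 * M + 1) ^ 2) / ε * (1 / (1 + l ^ 2)) := by positivity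
    nlinarith [h0]

lemma interval_eq_arctan_integral {ω : Measure ℝ} [SFinite ω]
    (hω : Integrable (fun l : ℝ => 1 / (1 + l ^ 2)) ω)
    {ε a b : ℝ} (hε : 0 < ε) (hab : a ≤ b) :
    (∫ lam in a..b, ∫ l, ε / ((l - lam) ^ 2 + ε ^ 2) ∂ω)
      = (∫ l, (Real.arctan ((b - l) / ε) - Real.arctan ((a - l) / ε)) ∂ω)
    ∧ IntervalIntegrable (fun lam => ∫ l, ε / ((l - lam) ^ 2 + ε ^ 2) ∂ω) volume a b := by
  set μ : Measure ℝ := volume.restrict (Set.Ioc a b) with hμ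
  haveI : IsFiniteMeasure μ := by
    constructor
    rw [hμ, Measure.restrict_apply_univ, Real.volume_Ioc]
    exact ENNReal.ofReal_lt_top
  set proj : ℝ → ℝ := fun lam => max a (min lam b) with hproj
  have hprojmem : ∀ lam, a ≤ proj lam ∧ proj lam ≤ b :=
    fun lam => ⟨le_max_left _ _, max_le hab (min_le_right _ _)⟩
  have hprojeq : ∀ lam ∈ Set.Ioc a b, proj lam = lam := by
    intro lam hlam
    rw [hproj]
    simp only
    rw [min_eq_left hlam.2, max_eq_right hlam.1.le]
  set F : ℝ × ℝ → ℝ := fun p => ε / ((p.2 - proj p.1) ^ 2 + ε ^ 2) with hF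
  have hFcont : Continuous F := by
    apply continuous_const.div
    · apply Continuous.add ?_ continuous_const
      apply Continuous.pow
      exact continuous_snd.sub ((continuous_const.max ((continuous_fst.min continuous_const))))
    · intro p; positivity
  have hFpos : ∀ p, 0 ≤ F p := fun p => by rw [hF]; positivity
  have hFint : Integrable F (μ.prod ω) := by
    refine Integrable.mono'
      (integrable_comp_snd (μ := μ)
        (hω.const_mul ((1 + (2 * (|a| ⊔ |b|) + 1) ^ 2) / ε + 4 * ε)))
      hFcont.aestronglyMeasurable (Filter.Eventually.of_forall fun p => ?_)
    rw [Real.norm_eq_abs, abs_of_nonneg (hFpos p)]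
    exact kernel_bound hε (hprojmem p.1).1 (hprojmem p.1).2 p.2
  have hswap := MeasureTheory.integral_integral_swap
    (f := fun lam l => ε / ((l - proj lam) ^ 2 + ε ^ 2)) (μ := μ) (ν := ω) hFint
  have hcongr1 : (∫ lam in a..b, ∫ l, ε / ((l - lam) ^ 2 + ε ^ 2) ∂ω)
      = ∫ lam, ∫ l, ε / ((l - proj lam) ^ 2 + ε ^ 2) ∂ω ∂μ := by
    rw [intervalIntegral.integral_of_le hab]
    refine setIntegral_congr_fun measurableSet_Ioc ?_
    intro lam hlam
    simp only [hprojeq lam hlam]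
  have hinner : ∀ l : ℝ, (∫ lam, ε / ((l - proj lam) ^ 2 + ε ^ 2) ∂μ)
      = Real.arctan ((b - l) / ε) - Real.arctan ((a - l) / ε) := by
    intro l
    have : (∫ lam, ε / ((l - proj lam) ^ 2 + ε ^ 2) ∂μ)
        = ∫ lam in Set.Ioc a b, ε / ((l - lam) ^ 2 + ε ^ 2) := by
      refine setIntegral_congr_fun measurableSet_Ioc ?_
      intro lam hlam
      simp only [hprojeq lam hlam]
    rw [this, ← intervalIntegral.integral_of_le hab, poisson_integral hε]
  constructor
  · rw [hcongr1, hswap]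
    exact integral_congr_ae (Filter.Eventually.of_forall fun l => hinner l)
  · rw [intervalIntegrable_iff_integrableOn_Ioc_of_le hab]
    have h1 : Integrable (fun lam => ∫ l, ε / ((l - proj lam) ^ 2 + ε ^ 2) ∂ω) μ :=
      hFint.integral_prod_left
    refine h1.congr ?_
    refine (ae_restrict_mem measurableSet_Ioc).mono fun lam hlam => ?_
    simp only [hprojeq lam hlam]

lemma arctan_diff_quad {ε u v : ℝ} (hε : 0 < ε) (hu : 0 < u) (huv : u ≤ v) :
    Real.arctan (v / ε) - Real.arctan (u / ε) ≤ ε * (v - u) / u ^ 2 := by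
  have hv : 0 < v := lt_of_lt_of_le hu huv
  have hpu : 0 < u / ε := by positivity
  have hpv : 0 < v / ε := by positivity
  have h1 : Real.arctan (v / ε) = π / 2 - Real.arctan (ε / v) := by
    have := Real.arctan_inv_of_pos hpv
    rw [inv_div] at this
    linarith
  have h2 : Real.arctan (u / ε) = π / 2 - Real.arctan (ε / u) := by
    have := Real.arctan_inv_of_pos hpu
    rw [inv_div] at this
    linarith
  rw [h1, h2]
  have h3 : ε / v ≤ ε / u := div_le_div_of_nonneg_left hε.le hu huv
  have h4 := arctan_sub_arctan_le h3
  have h5 : ε / u - ε / v = ε * (v - u) / (u * v) := by field_simp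
  have h6 : ε * (v - u) / (u * v) ≤ ε * (v - u) / u ^ 2 := by
    apply div_le_div_of_nonneg_left ?_ (by positivity) ?_
    · nlinarith
    · nlinarith
  linarith

lemma arctan_diff_nonneg {ε a b l : ℝ} (hε : 0 < ε) (hab : a ≤ b) :
    0 ≤ Real.arctan ((b - l) / ε) - Real.arctan ((a - l) / ε) := by
  have h : (a - l) / ε ≤ (b - l) / ε := by
    rw [div_le_div_iff_of_pos_right hε]
    linarith
  have := Real.arctan_strictMono.monotone h
  linarith

lemma arctan_diff_bound {ε a b : ℝ} (hε : 0 < ε) (hε1 : ε ≤ 1) (hab : a ≤ b) (l : ℝ) :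
    (1 / π) * (Real.arctan ((b - l) / ε) - Real.arctan ((a - l) / ε))
      ≤ (1 + (2 * (|a| ⊔ |b|) + 1) ^ 2 + 4 * (b - a)) * (1 / (1 + l ^ 2)) := by
  set M := |a| ⊔ |b| with hM
  have hM0 : 0 ≤ M := le_trans (abs_nonneg a) le_sup_left
  have haM : -M ≤ a := by
    have h := le_sup_left (a := |a|) (b := |b|)
    linarith [neg_abs_le a]
  have hbM : b ≤ M := le_trans (le_abs_self b) le_sup_right
  have hl2 : (0:ℝ) < 1 + l ^ 2 := by positivity
  have hπ : (0:ℝ) < π := Real.pi_pos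
  have hπ1 : 1 / π ≤ 1 := by
    rw [div_le_one hπ]; linarith [Real.pi_gt_three]
  have hnn := arctan_diff_nonneg (l := l) hε hab
  have habM : 0 ≤ b - a := by linarith
  rcases le_or_gt (|l|) (2 * M + 1) with hc | hc
  · have h1 : (1 / π) * (Real.arctan ((b - l) / ε) - Real.arctan ((a - l) / ε)) ≤ 1 := by
      have hle_pi : Real.arctan ((b - l) / ε) - Real.arctan ((a - l) / ε) ≤ π := by
        have := Real.arctan_lt_pi_div_two ((b - l)/ε)
        have := Real.neg_pi_div_two_lt_arctan ((a - l)/ε)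
        linarith
      rw [one_div, inv_mul_le_iff₀ hπ, mul_one]
      exact hle_pi
    refine le_trans h1 ?_
    have hl2le : 1 + l ^ 2 ≤ 1 + (2 * M + 1) ^ 2 := by
      have := sq_le_sq' (by linarith [neg_abs_le l]) (le_trans (le_abs_self l) hc)
      linarith
    rw [mul_one_div, le_div_iff₀ hl2]
    nlinarith
  · have hquad : Real.arctan ((b - l) / ε) - Real.arctan ((a - l) / ε)
        ≤ 4 * (b - a) / (1 + l ^ 2) := by
      have husq : ∀ u : ℝ, (|l| + 1) / 2 ≤ u → (1 + l ^ 2) / 4 ≤ u ^ 2 := by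
        intro u hu
        have h0 : 0 ≤ |l| := abs_nonneg l
        nlinarith [sq_abs l]
      rcases le_or_gt 0 l with hl0 | hl0
      · -- l large positive : l > b
        have hlabs : |l| = l := abs_of_nonneg hl0
        rw [hlabs] at hc
        set u := l - b with hu
        set v := l - a with hv
        have hu0 : 0 < u := by rw [hu]; linarith
        have huv : u ≤ v := by rw [hu, hv]; linarith
        clear_value u v
        have hflip : Real.arctan ((b - l) / ε) - Real.arctan ((a - l) / ε)
            = Real.arctan (v / ε) - Real.arctan (u / ε) := by
          rw [show (b - l)/ε = -(u/ε) by rw [hu]; ring, show (a - l)/ε = -(v/ε) by rw [hv]; ring,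
            Real.arctan_neg, Real.arctan_neg]
          ring
        rw [hflip]
        refine le_trans (arctan_diff_quad hε hu0 huv) ?_
        have hvu : v - u = b - a := by rw [hu, hv]; ring
        have husq' : (1 + l ^ 2) / 4 ≤ u ^ 2 := by
          apply husq
          rw [hlabs, hu]
          linarith
        rw [hvu]
        rw [div_le_div_iff₀ (by positivity) hl2]
        have e1 := mul_le_mul_of_nonneg_left husq' habM
        have e2 := mul_le_mul_of_nonneg_right hε1 (mul_nonneg habM hl2.le)
        nlinarith [e1, e2]
      · -- l large negative : l < a
        have hlabs : |l| = -l := abs_of_neg hl0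
        rw [hlabs] at hc
        set u := a - l with hu
        set v := b - l with hv
        have hu0 : 0 < u := by rw [hu]; linarith
        have huv : u ≤ v := by rw [hu, hv]; linarith
        clear_value u v
        refine le_trans (arctan_diff_quad hε hu0 huv) ?_
        have hvu : v - u = b - a := by rw [hu, hv]; ring
        have husq' : (1 + l ^ 2) / 4 ≤ u ^ 2 := by
          apply husq
          rw [hlabs, hu]
          linarith
        rw [hvu]
        rw [div_le_div_iff₀ (by positivity) hl2]
        have e1 := mul_le_mul_of_nonneg_left husq' habM
        have e2 := mul_le_mul_of_nonneg_right hε1 (mul_nonneg habM hl2.le)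
        nlinarith [e1, e2]
    have h2 : (1 / π) * (Real.arctan ((b - l) / ε) - Real.arctan ((a - l) / ε))
        ≤ Real.arctan ((b - l) / ε) - Real.arctan ((a - l) / ε) := by
      nlinarith
    refine le_trans h2 (le_trans hquad ?_)
    rw [mul_one_div, div_le_div_iff_of_pos_right hl2]
    nlinarith [sq_nonneg (2 * M + 1)]

noncomputable def chi (a b : ℝ) : ℝ → ℝ := fun l =>
  ((Set.Ioo a b).indicator (fun _ => (1:ℝ)) l + (Set.Icc a b).indicator (fun _ => (1:ℝ)) l) / 2

lemma tendsto_arctan_div_top {c : ℝ} (hc : 0 < c) :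
    Tendsto (fun ε : ℝ => Real.arctan (c / ε)) (nhdsWithin 0 (Set.Ioi 0)) (nhds (π / 2)) := by
  have h1 : Tendsto (fun ε : ℝ => c / ε) (nhdsWithin 0 (Set.Ioi 0)) atTop := by
    have h2 := tendsto_inv_nhdsGT_zero (𝕜 := ℝ)
    have := h2.const_mul_atTop hc
    simpa [div_eq_mul_inv] using this
  exact (Real.tendsto_arctan_atTop.mono_right nhdsWithin_le_nhds).comp h1

lemma tendsto_arctan_div_bot {c : ℝ} (hc : c < 0) :
    Tendsto (fun ε : ℝ => Real.arctan (c / ε)) (nhdsWithin 0 (Set.Ioi 0)) (nhds (-(π / 2))) := by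
  have h1 := (tendsto_arctan_div_top (c := -c) (by linarith)).neg
  refine h1.congr fun ε => ?_
  rw [← Real.arctan_neg, neg_div, neg_neg]

lemma chi_pointwise {a b : ℝ} (hab : a < b) (l : ℝ) :
    Tendsto (fun ε : ℝ => (1 / π) * (Real.arctan ((b - l) / ε) - Real.arctan ((a - l) / ε)))
      (nhdsWithin 0 (Set.Ioi 0)) (nhds (chi a b l)) := by
  have hπ : π ≠ 0 := Real.pi_ne_zero
  rcases lt_trichotomy l a with hla | hla | hla
  · have h1 := tendsto_arctan_div_top (c := b - l) (by linarith)
    have h2 := tendsto_arctan_div_top (c := a - l) (by linarith)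
    have := ((h1.sub h2).const_mul (1 / π))
    have hval : chi a b l = (1/π) * (π/2 - π/2) := by
      unfold chi
      rw [Set.indicator_of_notMem (by simp [Set.mem_Ioo]; intro h; linarith),
        Set.indicator_of_notMem (by simp [Set.mem_Icc]; intro h; linarith)]
      ring
    rw [hval]; exact this
  · subst hla
    have h1 := tendsto_arctan_div_top (c := b - l) (by linarith)
    have h2 : Tendsto (fun ε : ℝ => Real.arctan ((l - l) / ε)) (nhdsWithin 0 (Set.Ioi 0))
        (nhds 0) := by
      have : (fun ε : ℝ => Real.arctan ((l - l) / ε)) = fun _ => 0 := by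
        funext ε; simp
      rw [this]; exact tendsto_const_nhds
    have := ((h1.sub h2).const_mul (1 / π))
    have hval : chi l b l = (1/π) * (π/2 - 0) := by
      unfold chi
      rw [Set.indicator_of_notMem (by simp [Set.mem_Ioo]),
        Set.indicator_of_mem (by simp [Set.mem_Icc]; linarith)]
      field_simp
      ring
    rw [hval]; exact this
  · rcases lt_trichotomy l b with hlb | hlb | hlb
    · have h1 := tendsto_arctan_div_top (c := b - l) (by linarith)
      have h2 := tendsto_arctan_div_bot (c := a - l) (by linarith)
      have := ((h1.sub h2).const_mul (1 / π))
      have hval : chi a b l = (1/π) * (π/2 - -(π/2)) := by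
        unfold chi
        rw [Set.indicator_of_mem (by simp [Set.mem_Ioo]; exact ⟨hla, hlb⟩),
          Set.indicator_of_mem (by simp [Set.mem_Icc]; exact ⟨hla.le, hlb.le⟩)]
        field_simp
        ring
      rw [hval]; exact this
    · subst hlb
      have h1 : Tendsto (fun ε : ℝ => Real.arctan ((l - l) / ε)) (nhdsWithin 0 (Set.Ioi 0))
          (nhds 0) := by
        have : (fun ε : ℝ => Real.arctan ((l - l) / ε)) = fun _ => 0 := by
          funext ε; simp
        rw [this]; exact tendsto_const_nhds
      have h2 := tendsto_arctan_div_bot (c := a - l) (by linarith)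
      have := ((h1.sub h2).const_mul (1 / π))
      have hval : chi a l l = (1/π) * (0 - -(π/2)) := by
        unfold chi
        rw [Set.indicator_of_notMem (by simp [Set.mem_Ioo]),
          Set.indicator_of_mem (by simp [Set.mem_Icc]; linarith)]
        field_simp
        ring
      rw [hval]; exact this
    · have h1 := tendsto_arctan_div_bot (c := b - l) (by linarith)
      have h2 := tendsto_arctan_div_bot (c := a - l) (by linarith)
      have := ((h1.sub h2).const_mul (1 / π))
      have hval : chi a b l = (1/π) * (-(π/2) - -(π/2)) := by
        unfold chi
        rw [Set.indicator_of_notMem (by simp [Set.mem_Ioo]; intro h; linarith),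
          Set.indicator_of_notMem (by simp [Set.mem_Icc]; intro h; linarith)]
        ring
      rw [hval]; exact this

lemma integral_chi {ω : Measure ℝ} {a b : ℝ} (h1 : ω (Set.Ioo a b) ≠ ⊤)
    (h2 : ω (Set.Icc a b) ≠ ⊤) :
    ∫ l, chi a b l ∂ω = ((ω (Set.Ioo a b)).toReal + (ω (Set.Icc a b)).toReal) / 2 := by
  unfold chi
  have hint1 : Integrable ((Set.Ioo a b).indicator (fun _ => (1:ℝ))) ω :=
    (integrable_indicator_iff measurableSet_Ioo).2 (integrableOn_const h1)
  have hint2 : Integrable ((Set.Icc a b).indicator (fun _ => (1:ℝ))) ω :=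
    (integrable_indicator_iff measurableSet_Icc).2 (integrableOn_const h2)
  rw [integral_div, integral_add hint1 hint2,
    integral_indicator_const (1:ℝ) measurableSet_Ioo,
    integral_indicator_const (1:ℝ) measurableSet_Icc]
  simp [smul_eq_mul, Measure.real]

lemma tendsto_omega_Ioc {ω : Measure ℝ} (p : ℝ) (hfin : ω (Set.Ioc p (p + 1)) ≠ ⊤) :
    Tendsto (fun δ : ℝ => (ω (Set.Ioc p (p + δ))).toReal)
      (nhdsWithin 0 (Set.Ioi 0)) (nhds 0) := by
  set s : ℕ → Set ℝ := fun n => Set.Ioc p (p + 1 / (n + 1)) with hs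
  have hanti : Antitone s := by
    intro n m hnm
    apply Set.Ioc_subset_Ioc le_rfl
    have h1 : (0:ℝ) < n + 1 := by positivity
    have h2 : (n:ℝ) + 1 ≤ (m:ℝ) + 1 := by exact_mod_cast by omega
    linarith [one_div_le_one_div_of_le h1 h2]
  have hempty : (⋂ n, s n) = ∅ := by
    ext x
    simp only [Set.mem_iInter, Set.mem_empty_iff_false, iff_false, not_forall]
    by_cases hx : p < x
    · obtain ⟨n, hn⟩ := exists_nat_one_div_lt (show (0:ℝ) < x - p by linarith)
      exact ⟨n, by simp only [hs, Set.mem_Ioc, not_and, not_le]; intro _; linarith⟩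
    · exact ⟨0, by simp only [hs, Set.mem_Ioc, not_and]; intro h; exact absurd h hx⟩
  have htend : Tendsto (fun n => ω (s n)) atTop (nhds 0) := by
    have h0 : ω (s 0) ≠ ⊤ := by
      refine ne_top_of_le_ne_top hfin (measure_mono ?_)
      apply Set.Ioc_subset_Ioc le_rfl
      norm_num
    have := tendsto_measure_iInter_atTop
      (fun n => (measurableSet_Ioc : MeasurableSet (s n)).nullMeasurableSet)
      hanti ⟨0, h0⟩
    rw [hempty] at this
    simp only [measure_empty] at this
    exact this.congr fun n => rfl
  have htoReal : Tendsto (fun n => (ω (s n)).toReal) atTop (nhds 0) := by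
    have := (ENNReal.tendsto_toReal (by simp)).comp htend
    simpa [Function.comp_def] using this
  rw [Metric.tendsto_nhdsWithin_nhds]
  intro η hη
  rw [Metric.tendsto_atTop] at htoReal
  obtain ⟨N, hN⟩ := htoReal η hη
  refine ⟨1 / (N + 1), by positivity, fun {δ} hδ hdist => ?_⟩
  have hδ0 : 0 < δ := hδ
  have hδlt : δ < 1 / (N + 1) := by
    rw [Real.dist_eq, sub_zero, abs_of_pos hδ0] at hdist
    exact hdist
  have hsub : Set.Ioc p (p + δ) ⊆ s N := Set.Ioc_subset_Ioc le_rfl (by linarith)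
  have hfin' : ω (s N) ≠ ⊤ := by
    refine ne_top_of_le_ne_top hfin (measure_mono ?_)
    apply Set.Ioc_subset_Ioc le_rfl
    have : (0:ℝ) < N + 1 := by positivity
    have h2 : 1 / ((N:ℝ) + 1) ≤ 1 := by
      rw [div_le_one this]; linarith [Nat.cast_nonneg (α := ℝ) N]
    linarith
  have hmono : (ω (Set.Ioc p (p + δ))).toReal ≤ (ω (s N)).toReal :=
    ENNReal.toReal_mono hfin' (measure_mono hsub)
  have hNval := hN N le_rfl
  rw [Real.dist_eq, sub_zero] at hNval ⊢
  rw [abs_of_nonneg ENNReal.toReal_nonneg] at hNval ⊢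
  exact lt_of_le_of_lt hmono hNval

/-- Stieltjes inversion formula: the representing measure of a Herglotz function in
Nevanlinna representation is recovered from boundary values of `Im m`. -/
theorem stieltjes_inversion (ω : Measure ℝ) (c d : ℝ) (hd : 0 ≤ d)
    (hω : Integrable (fun l : ℝ => 1 / (1 + l ^ 2)) ω)
    (m : ℂ → ℂ)
    (hm : ∀ z : ℂ, 0 < z.im →
      m z = (c : ℂ) + (d : ℂ) * z +
        ∫ l : ℝ, (((l : ℂ) - z)⁻¹ - ((l / (1 + l ^ 2) : ℝ) : ℂ)) ∂ω)
    (lam1 lam2 : ℝ) (hlam : lam1 < lam2) :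
    ∃ L : ℝ → ℝ,
      (∀ δ > 0, Tendsto (fun ε : ℝ =>
          (1 / Real.pi) * ∫ l in (lam1 + δ)..(lam2 + δ), (m ((l : ℂ) + ε * Complex.I)).im)
        (nhdsWithin 0 (Set.Ioi 0)) (nhds (L δ))) ∧
      Tendsto L (nhdsWithin 0 (Set.Ioi 0)) (nhds (ω (Set.Ioc lam1 lam2)).toReal) := by

  haveI hsf : SigmaFinite ω := omega_sigmaFinite hω
  set L : ℝ → ℝ := fun δ =>
    ((ω (Set.Ioo (lam1 + δ) (lam2 + δ))).toReal
      + (ω (Set.Icc (lam1 + δ) (lam2 + δ))).toReal) / 2 with hLdef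
  have hev : ∀ᶠ ε in nhdsWithin (0:ℝ) (Set.Ioi 0), ε ∈ Set.Ioc (0:ℝ) 1 :=
    Ioc_mem_nhdsGT_of_mem ⟨le_refl 0, zero_lt_one⟩
  refine ⟨L, ?_, ?_⟩
  · -- inner limit
    intro δ hδ
    set a := lam1 + δ with ha
    set b := lam2 + δ with hb
    have hab : a < b := by rw [ha, hb]; linarith
    have hIoofin : ω (Set.Ioo a b) ≠ ⊤ := (finite_of_bddset hω Set.Ioo_subset_Icc_self).ne
    have hIccfin : ω (Set.Icc a b) ≠ ⊤ := (finite_of_bddset hω (subset_refl _)).ne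
    have hee : ∀ ε : ℝ, 0 < ε →
        (1 / Real.pi) * ∫ l in a..b, (m ((l : ℂ) + ε * Complex.I)).im
        = (1 / π) * (d * ε * (b - a))
          + ∫ l, (1 / π) * (Real.arctan ((b - l) / ε) - Real.arctan ((a - l) / ε)) ∂ω := by
      intro ε hε
      have him : ∀ lam : ℝ, (m ((lam : ℂ) + ε * Complex.I)).im
          = d * ε + ∫ l, ε / ((l - lam) ^ 2 + ε ^ 2) ∂ω := by
        intro lam
        refine im_m_eq hω hm hε lam (integrand_integrable hω ?_)
        simpa using hε
      have hswap := interval_eq_arctan_integral hω hε hab.le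
      calc (1 / Real.pi) * ∫ l in a..b, (m ((l : ℂ) + ε * Complex.I)).im
          = (1 / Real.pi) * ∫ lam in a..b,
              (d * ε + ∫ l, ε / ((l - lam) ^ 2 + ε ^ 2) ∂ω) := by
            congr 1
            exact intervalIntegral.integral_congr fun lam _ => him lam
        _ = (1 / Real.pi) * ((b - a) * (d * ε)
              + ∫ l, (Real.arctan ((b - l) / ε) - Real.arctan ((a - l) / ε)) ∂ω) := by
            rw [intervalIntegral.integral_add intervalIntegrable_const hswap.2,
              intervalIntegral.integral_const, hswap.1, smul_eq_mul]
        _ = _ := by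
            rw [mul_add, ← MeasureTheory.integral_const_mul]
            ring
    have T1 : Tendsto (fun ε : ℝ => (1 / π) * (d * ε * (b - a)))
        (nhdsWithin 0 (Set.Ioi 0)) (nhds 0) := by
      have hcont : Continuous fun ε : ℝ => (1 / π) * (d * ε * (b - a)) := by continuity
      have := (hcont.tendsto 0).mono_left
        (nhdsWithin_le_nhds (s := Set.Ioi (0:ℝ)))
      simpa using this
    have T2 : Tendsto (fun ε : ℝ =>
        ∫ l, (1 / π) * (Real.arctan ((b - l) / ε) - Real.arctan ((a - l) / ε)) ∂ω)
        (nhdsWithin 0 (Set.Ioi 0)) (nhds (∫ l, chi a b l ∂ω)) := by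
      refine tendsto_integral_filter_of_dominated_convergence
        (fun l => (1 + (2 * (|a| ⊔ |b|) + 1) ^ 2 + 4 * (b - a)) * (1 / (1 + l ^ 2)))
        ?_ ?_ (hω.const_mul _) ?_
      · refine hev.mono fun ε hε => ?_
        refine Continuous.aestronglyMeasurable ?_
        apply Continuous.mul continuous_const
        apply Continuous.sub
        · exact Real.continuous_arctan.comp ((continuous_const.sub continuous_id).div_const ε)
        · exact Real.continuous_arctan.comp ((continuous_const.sub continuous_id).div_const ε)
      · refine hev.mono fun ε hε => ?_
        refine Filter.Eventually.of_forall fun l => ?_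
        have hnn := arctan_diff_nonneg (l := l) hε.1 hab.le
        have hπ : (0:ℝ) < π := Real.pi_pos
        rw [Real.norm_eq_abs, abs_of_nonneg (by positivity)]
        exact arctan_diff_bound hε.1 hε.2 hab.le l
      · exact Filter.Eventually.of_forall (chi_pointwise hab)
    have hLδ : ∫ l, chi a b l ∂ω = L δ := integral_chi hIoofin hIccfin
    have := T1.add T2
    rw [zero_add, hLδ] at this
    refine Tendsto.congr' ?_ this
    filter_upwards [hev] with ε hε
    exact (hee ε hε.1).symm
  · -- outer limit
    have hT : ω (Set.Ioc lam1 lam2) ≠ ⊤ := (finite_of_bddset hω Set.Ioc_subset_Icc_self).ne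
    set T : ℝ := (ω (Set.Ioc lam1 lam2)).toReal with hTdef
    have he1 : Tendsto (fun δ : ℝ => (ω (Set.Ioc lam1 (lam1 + δ))).toReal)
        (nhdsWithin 0 (Set.Ioi 0)) (nhds 0) :=
      tendsto_omega_Ioc lam1 (finite_of_bddset hω Set.Ioc_subset_Icc_self).ne
    have he2 : Tendsto (fun δ : ℝ => (ω (Set.Ioc lam2 (lam2 + δ))).toReal)
        (nhdsWithin 0 (Set.Ioi 0)) (nhds 0) :=
      tendsto_omega_Ioc lam2 (finite_of_bddset hω Set.Ioc_subset_Icc_self).ne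
    refine tendsto_of_tendsto_of_tendsto_of_le_of_le'
      (f := L)
      (g := fun δ => T - (ω (Set.Ioc lam1 (lam1 + δ))).toReal)
      (h := fun δ => T + (ω (Set.Ioc lam2 (lam2 + δ))).toReal)
      ?_ ?_ ?_ ?_
    · have := tendsto_const_nhds (x := T) (f := nhdsWithin (0:ℝ) (Set.Ioi 0)) |>.sub he1
      simpa using this
    · have := tendsto_const_nhds (x := T) (f := nhdsWithin (0:ℝ) (Set.Ioi 0)) |>.add he2
      simpa using this
    · -- lower bound
      refine hev.mono fun δ hδ => ?_
      have hδ0 : 0 < δ := hδ.1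
      have hIoofin : ω (Set.Ioo (lam1 + δ) (lam2 + δ)) ≠ ⊤ :=
        (finite_of_bddset hω Set.Ioo_subset_Icc_self).ne
      have hIccfin : ω (Set.Icc (lam1 + δ) (lam2 + δ)) ≠ ⊤ :=
        (finite_of_bddset hω (subset_refl _)).ne
      have he1fin : ω (Set.Ioc lam1 (lam1 + δ)) ≠ ⊤ :=
        (finite_of_bddset hω Set.Ioc_subset_Icc_self).ne
      have hsub1 : Set.Ioc lam1 lam2 ⊆
          Set.Ioo (lam1 + δ) (lam2 + δ) ∪ Set.Ioc lam1 (lam1 + δ) := by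
        intro x hx
        by_cases hxδ : x ≤ lam1 + δ
        · exact Or.inr ⟨hx.1, hxδ⟩
        · exact Or.inl ⟨not_le.mp hxδ, lt_of_le_of_lt hx.2 (by linarith)⟩
      have hmeas1 : ω (Set.Ioc lam1 lam2)
          ≤ ω (Set.Ioo (lam1 + δ) (lam2 + δ)) + ω (Set.Ioc lam1 (lam1 + δ)) :=
        le_trans (measure_mono hsub1) (measure_union_le _ _)
      have hreal1 : T ≤ (ω (Set.Ioo (lam1 + δ) (lam2 + δ))).toReal
          + (ω (Set.Ioc lam1 (lam1 + δ))).toReal := by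
        have h := ENNReal.toReal_mono (by
          rw [ENNReal.add_ne_top]; exact ⟨hIoofin, he1fin⟩) hmeas1
        rw [ENNReal.toReal_add hIoofin he1fin] at h
        exact h
      have hIooIcc : (ω (Set.Ioo (lam1 + δ) (lam2 + δ))).toReal
          ≤ (ω (Set.Icc (lam1 + δ) (lam2 + δ))).toReal :=
        ENNReal.toReal_mono hIccfin (measure_mono Set.Ioo_subset_Icc_self)
      rw [hLdef]
      simp only
      linarith
    · -- upper bound
      refine hev.mono fun δ hδ => ?_
      have hδ0 : 0 < δ := hδ.1
      have hIccfin : ω (Set.Icc (lam1 + δ) (lam2 + δ)) ≠ ⊤ :=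
        (finite_of_bddset hω (subset_refl _)).ne
      have he2fin : ω (Set.Ioc lam2 (lam2 + δ)) ≠ ⊤ :=
        (finite_of_bddset hω Set.Ioc_subset_Icc_self).ne
      have hsub2 : Set.Icc (lam1 + δ) (lam2 + δ) ⊆
          Set.Ioc lam1 lam2 ∪ Set.Ioc lam2 (lam2 + δ) := by
        intro x hx
        have hx1 : lam1 < x := lt_of_lt_of_le (by linarith) hx.1
        by_cases hx2 : x ≤ lam2
        · exact Or.inl ⟨hx1, hx2⟩
        · exact Or.inr ⟨not_le.mp hx2, hx.2⟩
      have hmeas2 : ω (Set.Icc (lam1 + δ) (lam2 + δ))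
          ≤ ω (Set.Ioc lam1 lam2) + ω (Set.Ioc lam2 (lam2 + δ)) :=
        le_trans (measure_mono hsub2) (measure_union_le _ _)
      have hreal2 : (ω (Set.Icc (lam1 + δ) (lam2 + δ))).toReal
          ≤ T + (ω (Set.Ioc lam2 (lam2 + δ))).toReal := by
        have h := ENNReal.toReal_mono (by
          rw [ENNReal.add_ne_top]; exact ⟨hT, he2fin⟩) hmeas2
        rw [ENNReal.toReal_add hT he2fin] at h
        exact h
      have hIooIcc : (ω (Set.Ioo (lam1 + δ) (lam2 + δ))).toReal
          ≤ (ω (Set.Icc (lam1 + δ) (lam2 + δ))).toReal :=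
        ENNReal.toReal_mono hIccfin (measure_mono Set.Ioo_subset_Icc_self)
      rw [hLdef]
      simp only
      linarith
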